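/- Fix m ≥ 1 and let B_m be the weighted complete bipartite graph with vertex set {a_1,…,a_m, b_1,…,b_m} and weights w(a_i,b_j) = 1 for all i,j (including i = j) and weight 0 on all pairs within {a_1,…,a_m} and within {b_1,…,b_m}. Then every hierarchical clustering tree T on B_m in which, for each i, the leaves a_i and b_i are the two children of a common internal node satisfies rev(T) = (2/3)·(m³ − m). -/

import Mathlib

open Finset

/-- A hierarchical clustering tree: a rooted binary tree with leaves labelled by vertices. -/
inductive HC (V : Type*) where
  | leaf : V → HC V
  | node : HC V → HC V → HC V

namespace HC

variable {V : Type*}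

/-- The list of leaf labels of a tree, left to right. -/
def leafList : HC V → List V
  | .leaf v => [v]
  | .node l r => leafList l ++ leafList r

/-- The set of leaf labels of a tree. -/
def leaves [DecidableEq V] (t : HC V) : Finset V :=
  t.leafList.toFinset

/-- `t.cluster i j` is the leaf set of the subtree of `t` rooted at the least common
ancestor of the leaves `i` and `j` (i.e. `leaves(T[i ∨ j])`). -/
def cluster [DecidableEq V] : HC V → V → V → Finset V
  | .leaf v, _, _ => {v}
  | .node l r, i, j =>
    if i ∈ l.leaves ∧ j ∈ l.leaves then l.cluster i j
    else if i ∈ r.leaves ∧ j ∈ r.leaves then r.cluster i j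
    else (HC.node l r).leaves

/-- `t` is a hierarchical clustering tree on the whole vertex type `V`:
its leaves are in bijection with `V`. -/
def IsTreeOn [Fintype V] [DecidableEq V] (t : HC V) : Prop :=
  t.leafList.Nodup ∧ t.leaves = Finset.univ

/-- Sum of `f A B` over all internal nodes of the tree, where `A`, `B` are the
leaf sets of the two children of the internal node. -/
def internalSum [DecidableEq V] (f : Finset V → Finset V → ℝ) : HC V → ℝ
  | .leaf _ => 0
  | .node l r => f l.leaves r.leaves + internalSum f l + internalSum f r

/-- The list of all subtrees of a tree. -/
def subtreesList : HC V → List (HC V)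
  | .leaf v => [.leaf v]
  | .node l r => .node l r :: (subtreesList l ++ subtreesList r)

/-- Dasgupta's cost: sum over unordered pairs `{i,j}` of distinct vertices of
`w i j * |leaves(T[i ∨ j])|`. -/
noncomputable def cost [Fintype V] [DecidableEq V] (w : V → V → ℝ) (t : HC V) : ℝ :=
  (1 / 2) * ∑ p ∈ Finset.univ.offDiag, w p.1 p.2 * ((t.cluster p.1 p.2).card : ℝ)

/-- Moseley–Wang revenue: sum over unordered pairs `{i,j}` of distinct vertices of
`w i j * |nonleaves(T[i ∨ j])|`. -/
noncomputable def rev [Fintype V] [DecidableEq V] (w : V → V → ℝ) (t : HC V) : ℝ :=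
  (1 / 2) * ∑ p ∈ Finset.univ.offDiag,
    w p.1 p.2 * ((Finset.univ \ t.cluster p.1 p.2).card : ℝ)

/-- Cohen-Addad et al.'s value: the same formula as cost, used for dissimilarity weights. -/
noncomputable def val [Fintype V] [DecidableEq V] (w : V → V → ℝ) (t : HC V) : ℝ :=
  cost w t

end HC

/-- The total weight `W`: the sum of `w i j` over unordered pairs of distinct vertices. -/
noncomputable def totalWeight {V : Type*} [Fintype V] [DecidableEq V] (w : V → V → ℝ) : ℝ :=
  (1 / 2) * ∑ p ∈ Finset.univ.offDiag, w p.1 p.2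

/-- The merge cost of merging disjoint clusters `A` and `B`. -/
noncomputable def mergeCost {V : Type*} [Fintype V] [DecidableEq V] (w : V → V → ℝ) (A B : Finset V) : ℝ :=
  (B.card : ℝ) * ∑ a ∈ A, ∑ c ∈ Finset.univ \ (A ∪ B), w a c
    + (A.card : ℝ) * ∑ b ∈ B, ∑ c ∈ Finset.univ \ (A ∪ B), w b c

/-- The merge revenue of merging disjoint clusters `A` and `B`. -/
noncomputable def mergeRev {V : Type*} [Fintype V] (w : V → V → ℝ) (A B : Finset V) : ℝ :=
  ((Fintype.card V : ℝ) - (A.card : ℝ) - (B.card : ℝ)) * ∑ a ∈ A, ∑ b ∈ B, w a b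

/-- The average linkage between disjoint nonempty clusters `A` and `B`. -/
noncomputable def avgLinkage {V : Type*} (w : V → V → ℝ) (A B : Finset V) : ℝ :=
  (1 / ((A.card : ℝ) * (B.card : ℝ))) * ∑ a ∈ A, ∑ b ∈ B, w a b

/-- A matching encoded as an involution `f : V → V`: the matched pairs are the pairs
`{v, f v}` with `f v ≠ v`; its weight is the sum of weights of matched pairs. -/
noncomputable def matchingWeight {V : Type*} [Fintype V] [DecidableEq V] (w : V → V → ℝ) (f : V → V) : ℝ :=
  (1 / 2) * ∑ v ∈ Finset.univ.filter (fun v => f v ≠ v), w v (f v)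

/-- A perfect matching encoded as a fixed-point-free involution. -/
def IsPerfectMatching {V : Type*} (f : V → V) : Prop :=
  (∀ v, f (f v) = v) ∧ ∀ v, f v ≠ v


/-- The complete bipartite weighted graph `B_m`: vertices `a_1,...,a_m` (left) and
`b_1,...,b_m` (right), `w(a_i, b_j) = 1` for all `i, j`, and weight `0` within each side. -/
noncomputable def wB (m : ℕ) : (Fin m ⊕ Fin m) → (Fin m ⊕ Fin m) → ℝ :=
  fun x y =>
    match x, y with
    | Sum.inl _, Sum.inr _ => 1
    | Sum.inr _, Sum.inl _ => 1
    | _, _ => 0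

/-- The weighted graph `G_n`: vertices `a_1,...,a_n` (left) and `b_1,...,b_n` (right),
`w(a_i, b_j) = 1` for `i ≠ j`, and weight `0` on all other pairs. -/
noncomputable def wG (n : ℕ) : (Fin n ⊕ Fin n) → (Fin n ⊕ Fin n) → ℝ :=
  fun x y =>
    match x, y with
    | Sum.inl i, Sum.inr j => if i = j then 0 else 1
    | Sum.inr i, Sum.inl j => if i = j then 0 else 1
    | _, _ => 0

/-- For each `i`, the leaves `a_i` and `b_i` are the two children of a common internal node
of `t` (in either order). -/
def pairCond (n : ℕ) (t : HC (Fin n ⊕ Fin n)) : Prop :=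
  ∀ i : Fin n,
    HC.node (HC.leaf (Sum.inl i)) (HC.leaf (Sum.inr i)) ∈ t.subtreesList ∨
    HC.node (HC.leaf (Sum.inr i)) (HC.leaf (Sum.inl i)) ∈ t.subtreesList


namespace HC
variable {V : Type*}

lemma leaves_node [DecidableEq V] (l r : HC V) :
    (node l r).leaves = l.leaves ∪ r.leaves := by
  simp [leaves, leafList]

lemma leaves_subset_of_mem_subtreesList [DecidableEq V] {s t : HC V}
    (h : s ∈ t.subtreesList) : s.leaves ⊆ t.leaves := by
  induction t with
  | leaf v => simp [subtreesList] at h; subst h; exact Finset.Subset.refl _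
  | node l r ihl ihr =>
    simp only [subtreesList, List.mem_cons, List.mem_append] at h
    rcases h with h | h | h
    · subst h; exact Finset.Subset.refl _
    · exact (ihl h).trans (by rw [leaves_node]; exact subset_union_left)
    · exact (ihr h).trans (by rw [leaves_node]; exact subset_union_right)

lemma nodup_node [DecidableEq V] {l r : HC V} (h : (node l r).leafList.Nodup) :
    l.leafList.Nodup ∧ r.leafList.Nodup ∧ Disjoint l.leaves r.leaves := by
  rw [show (node l r).leafList = l.leafList ++ r.leafList from rfl, List.nodup_append] at h
  exact ⟨h.1, h.2.1, List.disjoint_toFinset_iff_disjoint.2 (fun a ha hb => h.2.2 a ha a hb rfl)⟩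


end HC

namespace HCaux
open HC

def Good (m : ℕ) (t : HC (Fin m ⊕ Fin m)) : Prop :=
  ∀ i : Fin m, (Sum.inl i ∈ t.leaves ∨ Sum.inr i ∈ t.leaves) →
    (HC.node (HC.leaf (Sum.inl i)) (HC.leaf (Sum.inr i)) ∈ t.subtreesList ∨
     HC.node (HC.leaf (Sum.inr i)) (HC.leaf (Sum.inl i)) ∈ t.subtreesList)

def P (m : ℕ) (t : HC (Fin m ⊕ Fin m)) : Finset (Fin m) :=
  Finset.univ.filter (fun i => Sum.inl i ∈ t.leaves)

lemma pair_mem_leaves {m : ℕ} {t : HC (Fin m ⊕ Fin m)} {i : Fin m}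
    (h : HC.node (HC.leaf (Sum.inl i)) (HC.leaf (Sum.inr i)) ∈ t.subtreesList ∨
     HC.node (HC.leaf (Sum.inr i)) (HC.leaf (Sum.inl i)) ∈ t.subtreesList) :
    Sum.inl i ∈ t.leaves ∧ Sum.inr i ∈ t.leaves := by
  rcases h with h | h <;>
  · have := leaves_subset_of_mem_subtreesList h
    simp only [leaves, leafList, List.toFinset_append, List.toFinset_cons,
      List.toFinset_nil] at this
    constructor <;> apply this <;> simp

lemma mem_leaves_iff {m : ℕ} {t : HC (Fin m ⊕ Fin m)} (hg : Good m t) (i : Fin m) :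
    Sum.inl i ∈ t.leaves ↔ Sum.inr i ∈ t.leaves := by
  constructor <;> intro h
  · exact (pair_mem_leaves (hg i (Or.inl h))).2
  · exact (pair_mem_leaves (hg i (Or.inr h))).1

lemma leaves_eq {m : ℕ} {t : HC (Fin m ⊕ Fin m)} (hg : Good m t) :
    t.leaves = (P m t).image Sum.inl ∪ (P m t).image Sum.inr := by
  ext v
  cases v with
  | inl i => simp [P, mem_leaves_iff hg]
  | inr i => simp [P, mem_leaves_iff hg]

lemma card_leaves {m : ℕ} {t : HC (Fin m ⊕ Fin m)} (hg : Good m t) :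
    t.leaves.card = 2 * (P m t).card := by
  rw [leaves_eq hg, Finset.card_union_of_disjoint, Finset.card_image_of_injective _ Sum.inl_injective,
    Finset.card_image_of_injective _ Sum.inr_injective]
  · ring
  · simp [Finset.disjoint_left]

lemma good_children {m : ℕ} {l r : HC (Fin m ⊕ Fin m)}
    (hnd : (HC.node l r).leafList.Nodup) (hg : Good m (HC.node l r))
    (hA : ∀ i : Fin m, ¬(l = HC.leaf (Sum.inl i) ∧ r = HC.leaf (Sum.inr i)) ∧
      ¬(l = HC.leaf (Sum.inr i) ∧ r = HC.leaf (Sum.inl i))) :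
    Good m l ∧ Good m r := by
  obtain ⟨-, -, hdisj⟩ := nodup_node hnd
  constructor <;> intro i hi
  · have hmem : Sum.inl i ∈ (HC.node l r).leaves ∨ Sum.inr i ∈ (HC.node l r).leaves := by
      rw [leaves_node]; rcases hi with h | h
      · exact Or.inl (Finset.mem_union_left _ h)
      · exact Or.inr (Finset.mem_union_left _ h)
    have := hg i hmem
    rcases this with h | h <;>
      simp only [subtreesList, List.mem_cons, List.mem_append] at h <;>
      rcases h with h | h | h
    · exact absurd ⟨(HC.node.injEq _ _ _ _ ▸ h).1.symm, (HC.node.injEq _ _ _ _ ▸ h).2.symm⟩ (hA i).1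
    · exact Or.inl h
    · exfalso
      have hsub := pair_mem_leaves (t := r) (Or.inl h)
      rcases hi with h' | h'
      · exact Finset.disjoint_left.1 hdisj h' hsub.1
      · exact Finset.disjoint_left.1 hdisj h' hsub.2
    · exact absurd ⟨(HC.node.injEq _ _ _ _ ▸ h).1.symm, (HC.node.injEq _ _ _ _ ▸ h).2.symm⟩ (hA i).2
    · exact Or.inr h
    · exfalso
      have hsub := pair_mem_leaves (t := r) (Or.inr h)
      rcases hi with h' | h'
      · exact Finset.disjoint_left.1 hdisj h' hsub.1
      · exact Finset.disjoint_left.1 hdisj h' hsub.2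
  · have hmem : Sum.inl i ∈ (HC.node l r).leaves ∨ Sum.inr i ∈ (HC.node l r).leaves := by
      rw [leaves_node]; rcases hi with h | h
      · exact Or.inl (Finset.mem_union_right _ h)
      · exact Or.inr (Finset.mem_union_right _ h)
    have := hg i hmem
    rcases this with h | h <;>
      simp only [subtreesList, List.mem_cons, List.mem_append] at h <;>
      rcases h with h | h | h
    · exact absurd ⟨(HC.node.injEq _ _ _ _ ▸ h).1.symm, (HC.node.injEq _ _ _ _ ▸ h).2.symm⟩ (hA i).1
    · exfalso
      have hsub := pair_mem_leaves (t := l) (Or.inl h)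
      rcases hi with h' | h'
      · exact Finset.disjoint_left.1 hdisj hsub.1 h'
      · exact Finset.disjoint_left.1 hdisj hsub.2 h'
    · exact Or.inl h
    · exact absurd ⟨(HC.node.injEq _ _ _ _ ▸ h).1.symm, (HC.node.injEq _ _ _ _ ▸ h).2.symm⟩ (hA i).2
    · exfalso
      have hsub := pair_mem_leaves (t := l) (Or.inr h)
      rcases hi with h' | h'
      · exact Finset.disjoint_left.1 hdisj hsub.1 h'
      · exact Finset.disjoint_left.1 hdisj hsub.2 h'
    · exact Or.inr h



lemma cross_sum {m : ℕ} {l r : HC (Fin m ⊕ Fin m)} (hgl : Good m l) (hgr : Good m r) :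
    ∑ a ∈ l.leaves, ∑ b ∈ r.leaves, wB m a b
      = 2 * (P m l).card * (P m r).card := by
  rw [leaves_eq hgl, leaves_eq hgr]
  have dl : Disjoint ((P m l).image Sum.inl) ((P m l).image Sum.inr) := by
    simp [Finset.disjoint_left]
  have dr : Disjoint ((P m r).image Sum.inl) ((P m r).image Sum.inr) := by
    simp [Finset.disjoint_left]
  rw [Finset.sum_union dl]
  simp only [Finset.sum_union dr]
  rw [Finset.sum_image (fun x _ y _ h => Sum.inl_injective h),
      Finset.sum_image (fun x _ y _ h => Sum.inr_injective h)]
  simp only [Finset.sum_image (fun x _ y _ h => Sum.inl_injective h),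
      Finset.sum_image (fun x _ y _ h => Sum.inr_injective h)]
  simp [wB, Finset.sum_const, mul_comm]
  ring

lemma P_node {m : ℕ} (l r : HC (Fin m ⊕ Fin m)) :
    P m (HC.node l r) = P m l ∪ P m r := by
  ext i; simp [P, leaves_node]

lemma P_disjoint {m : ℕ} {l r : HC (Fin m ⊕ Fin m)}
    (hdisj : Disjoint l.leaves r.leaves) : Disjoint (P m l) (P m r) := by
  simp only [Finset.disjoint_left, P, Finset.mem_filter] at *
  intro a ha hb
  exact hdisj ha.2 hb.2

lemma main_sum (m : ℕ) : ∀ t : HC (Fin m ⊕ Fin m), t.leafList.Nodup → Good m t →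
    ∑ p ∈ t.leaves.offDiag, wB m p.1 p.2 * ((t.cluster p.1 p.2).card : ℝ)
      = 4 * ((P m t).card : ℝ) + (8/3) * (((P m t).card : ℝ)^3 - ((P m t).card : ℝ)) := by
  intro t
  induction t with
  | leaf v =>
    intro _ hg
    exfalso
    rcases v with i | i
    · rcases hg i (Or.inl (by simp [HC.leaves, HC.leafList])) with h | h <;>
        simp [HC.subtreesList] at h
    · rcases hg i (Or.inr (by simp [HC.leaves, HC.leafList])) with h | h <;>
        simp [HC.subtreesList] at h
  | node l r ihl ihr =>
    intro hnd hg
    obtain ⟨hnl, hnr, hdisj⟩ := nodup_node hnd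
    by_cases hA : ∃ i : Fin m, (l = HC.leaf (Sum.inl i) ∧ r = HC.leaf (Sum.inr i)) ∨
        (l = HC.leaf (Sum.inr i) ∧ r = HC.leaf (Sum.inl i))
    · rcases hA with ⟨i, ⟨hl, hr⟩ | ⟨hl, hr⟩⟩ <;> subst hl <;> subst hr
      · have hlv : (HC.node (HC.leaf (Sum.inl i)) (HC.leaf (Sum.inr i))).leaves
            = {Sum.inl i, Sum.inr i} := by
          simp [leaves_node, HC.leaves, HC.leafList]
        have hP : P m (HC.node (HC.leaf (Sum.inl i)) (HC.leaf (Sum.inr i))) = {i} := by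
          ext j
          simp [P, hlv]
        have hod : ({Sum.inl i, Sum.inr i} : Finset (Fin m ⊕ Fin m)).offDiag
            = {(Sum.inl i, Sum.inr i), (Sum.inr i, Sum.inl i)} := by
          ext ⟨x, y⟩
          simp only [Finset.mem_offDiag, Finset.mem_insert, Finset.mem_singleton,
            Prod.mk.injEq]
          constructor
          · rintro ⟨(rfl | rfl), (rfl | rfl), h⟩ <;> simp_all
          · rintro (⟨rfl, rfl⟩ | ⟨rfl, rfl⟩) <;> simp_all
        have hc1 : (HC.node (HC.leaf (Sum.inl i)) (HC.leaf (Sum.inr i))).cluster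
            (Sum.inl i) (Sum.inr i) = {Sum.inl i, Sum.inr i} := by
          rw [HC.cluster, if_neg (by simp [HC.leaves, HC.leafList]),
            if_neg (by simp [HC.leaves, HC.leafList]), hlv]
        have hc2 : (HC.node (HC.leaf (Sum.inl i)) (HC.leaf (Sum.inr i))).cluster
            (Sum.inr i) (Sum.inl i) = {Sum.inl i, Sum.inr i} := by
          rw [HC.cluster, if_neg (by simp [HC.leaves, HC.leafList]),
            if_neg (by simp [HC.leaves, HC.leafList]), hlv]
        rw [hlv, hod, Finset.sum_insert (by simp), Finset.sum_singleton, hP]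
        simp only [hc1, hc2]
        rw [Finset.card_insert_of_notMem (by simp), Finset.card_singleton]
        simp [wB]
        norm_num
      · have hlv : (HC.node (HC.leaf (Sum.inr i)) (HC.leaf (Sum.inl i))).leaves
            = {Sum.inr i, Sum.inl i} := by
          simp [leaves_node, HC.leaves, HC.leafList]
        have hP : P m (HC.node (HC.leaf (Sum.inr i)) (HC.leaf (Sum.inl i))) = {i} := by
          ext j
          simp [P, hlv]
        have hod : ({Sum.inr i, Sum.inl i} : Finset (Fin m ⊕ Fin m)).offDiag
            = {(Sum.inr i, Sum.inl i), (Sum.inl i, Sum.inr i)} := by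
          ext ⟨x, y⟩
          simp only [Finset.mem_offDiag, Finset.mem_insert, Finset.mem_singleton,
            Prod.mk.injEq]
          constructor
          · rintro ⟨(rfl | rfl), (rfl | rfl), h⟩ <;> simp_all
          · rintro (⟨rfl, rfl⟩ | ⟨rfl, rfl⟩) <;> simp_all
        have hc1 : (HC.node (HC.leaf (Sum.inr i)) (HC.leaf (Sum.inl i))).cluster
            (Sum.inr i) (Sum.inl i) = {Sum.inr i, Sum.inl i} := by
          rw [HC.cluster, if_neg (by simp [HC.leaves, HC.leafList]),
            if_neg (by simp [HC.leaves, HC.leafList]), hlv]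
        have hc2 : (HC.node (HC.leaf (Sum.inr i)) (HC.leaf (Sum.inl i))).cluster
            (Sum.inl i) (Sum.inr i) = {Sum.inr i, Sum.inl i} := by
          rw [HC.cluster, if_neg (by simp [HC.leaves, HC.leafList]),
            if_neg (by simp [HC.leaves, HC.leafList]), hlv]
        rw [hlv, hod, Finset.sum_insert (by simp), Finset.sum_singleton, hP]
        simp only [hc1, hc2]
        rw [Finset.card_insert_of_notMem (by simp), Finset.card_singleton]
        simp [wB]
        norm_num
    · push_neg at hA
      have hA' : ∀ i : Fin m, ¬(l = HC.leaf (Sum.inl i) ∧ r = HC.leaf (Sum.inr i)) ∧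
          ¬(l = HC.leaf (Sum.inr i) ∧ r = HC.leaf (Sum.inl i)) := by
        intro i
        have := hA i
        tauto
      obtain ⟨hgl, hgr⟩ := good_children hnd hg hA'
      have hd := Finset.disjoint_left.1 hdisj
      have d3 : Disjoint l.leaves.offDiag r.leaves.offDiag := by
        rw [Finset.disjoint_left]
        rintro ⟨x, y⟩ hx hy
        rw [Finset.mem_offDiag] at hx hy
        exact hd hx.1 hy.1
      have d2 : Disjoint (l.leaves.offDiag ∪ r.leaves.offDiag) (l.leaves ×ˢ r.leaves) := by
        rw [Finset.disjoint_left]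
        rintro ⟨x, y⟩ hx hy
        rw [Finset.mem_union] at hx
        rw [Finset.mem_product] at hy
        rcases hx with h | h <;> rw [Finset.mem_offDiag] at h
        · exact hd h.2.1 hy.2
        · exact hd hy.1 h.1
      have d1 : Disjoint (l.leaves.offDiag ∪ r.leaves.offDiag ∪ l.leaves ×ˢ r.leaves)
          (r.leaves ×ˢ l.leaves) := by
        rw [Finset.disjoint_left]
        rintro ⟨x, y⟩ hx hy
        rw [Finset.mem_product] at hy
        rw [Finset.mem_union, Finset.mem_union] at hx
        rcases hx with (h | h) | h
        · rw [Finset.mem_offDiag] at h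
          exact hd h.1 hy.1
        · rw [Finset.mem_offDiag] at h
          exact hd hy.2 h.2.1
        · rw [Finset.mem_product] at h
          exact hd h.1 hy.1
      rw [leaves_node, Finset.offDiag_union hdisj, Finset.sum_union d1,
        Finset.sum_union d2, Finset.sum_union d3]
      have e1 : ∑ p ∈ l.leaves.offDiag, wB m p.1 p.2 *
          (((HC.node l r).cluster p.1 p.2).card : ℝ)
          = ∑ p ∈ l.leaves.offDiag, wB m p.1 p.2 * ((l.cluster p.1 p.2).card : ℝ) := by
        refine Finset.sum_congr rfl fun p hp => ?_
        rw [Finset.mem_offDiag] at hp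
        rw [HC.cluster, if_pos ⟨hp.1, hp.2.1⟩]
      have e2 : ∑ p ∈ r.leaves.offDiag, wB m p.1 p.2 *
          (((HC.node l r).cluster p.1 p.2).card : ℝ)
          = ∑ p ∈ r.leaves.offDiag, wB m p.1 p.2 * ((r.cluster p.1 p.2).card : ℝ) := by
        refine Finset.sum_congr rfl fun p hp => ?_
        rw [Finset.mem_offDiag] at hp
        rw [HC.cluster, if_neg (fun hc => hd hc.1 hp.1), if_pos ⟨hp.1, hp.2.1⟩]
      have hk : ((HC.node l r).leaves.card : ℝ)
          = 2 * ((P m l).card : ℝ) + 2 * ((P m r).card : ℝ) := by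
        rw [card_leaves hg, P_node, Finset.card_union_of_disjoint (P_disjoint hdisj)]
        push_cast
        ring
      have e3 : ∑ p ∈ l.leaves ×ˢ r.leaves, wB m p.1 p.2 *
          (((HC.node l r).cluster p.1 p.2).card : ℝ)
          = (2 * ((P m l).card : ℝ) + 2 * ((P m r).card : ℝ)) *
            (2 * ((P m l).card : ℝ) * ((P m r).card : ℝ)) := by
        rw [show ∑ p ∈ l.leaves ×ˢ r.leaves, wB m p.1 p.2 *
            (((HC.node l r).cluster p.1 p.2).card : ℝ)
            = ∑ p ∈ l.leaves ×ˢ r.leaves,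
              ((HC.node l r).leaves.card : ℝ) * wB m p.1 p.2 from
          Finset.sum_congr rfl fun p hp => by
            rw [Finset.mem_product] at hp
            rw [HC.cluster, if_neg (fun hc => hd hc.2 hp.2),
              if_neg (fun hc => hd hp.1 hc.1)]
            ring]
        rw [← Finset.mul_sum, hk, Finset.sum_product]
        rw [cross_sum hgl hgr]
      have e4 : ∑ p ∈ r.leaves ×ˢ l.leaves, wB m p.1 p.2 *
          (((HC.node l r).cluster p.1 p.2).card : ℝ)
          = (2 * ((P m l).card : ℝ) + 2 * ((P m r).card : ℝ)) *
            (2 * ((P m r).card : ℝ) * ((P m l).card : ℝ)) := by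
        rw [show ∑ p ∈ r.leaves ×ˢ l.leaves, wB m p.1 p.2 *
            (((HC.node l r).cluster p.1 p.2).card : ℝ)
            = ∑ p ∈ r.leaves ×ˢ l.leaves,
              ((HC.node l r).leaves.card : ℝ) * wB m p.1 p.2 from
          Finset.sum_congr rfl fun p hp => by
            rw [Finset.mem_product] at hp
            rw [HC.cluster, if_neg (fun hc => hd hc.1 hp.1),
              if_neg (fun hc => hd hp.2 hc.2)]
            ring]
        rw [← Finset.mul_sum, hk, Finset.sum_product]
        rw [cross_sum hgr hgl]
      rw [e1, e2, e3, e4, ihl hnl hgl, ihr hnr hgr]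
      have hcard : ((P m (HC.node l r)).card : ℝ)
          = ((P m l).card : ℝ) + ((P m r).card : ℝ) := by
        rw [P_node, Finset.card_union_of_disjoint (P_disjoint hdisj)]
        push_cast
        ring
      rw [hcard]
      ring

lemma tot_weight (m : ℕ) :
    ∑ p ∈ (Finset.univ : Finset (Fin m ⊕ Fin m)).offDiag, wB m p.1 p.2
      = 2 * (m : ℝ)^2 := by
  have h := Finset.sum_union
    (Finset.disjoint_diag_offDiag (Finset.univ : Finset (Fin m ⊕ Fin m)))
    (f := fun p => wB m p.1 p.2)
  rw [Finset.diag_union_offDiag] at h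
  have hdiag : ∑ p ∈ (Finset.univ : Finset (Fin m ⊕ Fin m)).diag, wB m p.1 p.2 = 0 := by
    rw [Finset.sum_diag]
    apply Finset.sum_eq_zero
    rintro (i | i) _ <;> simp [wB]
  have hprod : ∑ p ∈ (Finset.univ : Finset (Fin m ⊕ Fin m)) ×ˢ Finset.univ,
      wB m p.1 p.2 = 2 * (m : ℝ)^2 := by
    rw [Finset.sum_product]
    rw [show (∑ x ∈ (Finset.univ : Finset (Fin m ⊕ Fin m)), ∑ y ∈ Finset.univ, wB m x y)
        = ∑ x : Fin m ⊕ Fin m, ∑ y : Fin m ⊕ Fin m, wB m x y from rfl]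
    rw [Fintype.sum_sum_type]
    simp [Fintype.sum_sum_type, wB, Finset.card_univ]
    ring
  rw [hprod, hdiag] at h
  linarith

end HCaux

/-- On the complete bipartite graph `B_m`, every hierarchical clustering tree in which,
for each `i`, the leaves `a_i` and `b_i` are the two children of a common internal node
has revenue `(2/3)·(m³ − m)`. -/
theorem stmt17 (m : ℕ) (hm : 1 ≤ m)
    (t : HC (Fin m ⊕ Fin m)) (ht : t.IsTreeOn) (hp : pairCond m t) :
    HC.rev (wB m) t = (2 / 3) * ((m : ℝ) ^ 3 - (m : ℝ)) := by
  have hg : HCaux.Good m t := fun i _ => hp i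
  have hmain := HCaux.main_sum m t ht.1 hg
  have hP : HCaux.P m t = Finset.univ := by
    ext i
    simp [HCaux.P, ht.2]
  rw [hP, Finset.card_univ, Fintype.card_fin, ht.2] at hmain
  have hcardV : (Finset.univ : Finset (Fin m ⊕ Fin m)).card = 2 * m := by
    rw [Finset.card_univ, Fintype.card_sum, Fintype.card_fin]
    ring
  have hterm : ∀ p ∈ (Finset.univ : Finset (Fin m ⊕ Fin m)).offDiag,
      wB m p.1 p.2 * (((Finset.univ \ t.cluster p.1 p.2).card : ℝ))
      = 2 * (m : ℝ) * wB m p.1 p.2 - wB m p.1 p.2 * ((t.cluster p.1 p.2).card : ℝ) := by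
    intro p _
    rw [Finset.card_sdiff_of_subset (Finset.subset_univ _),
      Nat.cast_sub (Finset.card_le_card (Finset.subset_univ _)), hcardV]
    push_cast
    ring
  unfold HC.rev
  rw [Finset.sum_congr rfl hterm, Finset.sum_sub_distrib, ← Finset.mul_sum,
    HCaux.tot_weight, hmain]
  ring
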